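/- There exists a well-stratified tree with no uncountable branches which admits no strictly monotonic map into ℝ. -/

import Mathlib

/-- A partial order is rooted if it has a minimum element. -/
def IsRooted (X : Type*) [PartialOrder X] : Prop := ∃ r : X, ∀ x, r ≤ x

/-- The set of predecessors of every element is linearly ordered. -/
def DownLinear (X : Type*) [PartialOrder X] : Prop :=
  ∀ x y z : X, y ≤ x → z ≤ x → y ≤ z ∨ z ≤ y

/-- A well-stratified tree: a rooted partial order in which the set of
predecessors of every element is well-ordered. -/
def IsWSTree (T : Type*) [PartialOrder T] : Prop :=
  IsRooted T ∧ DownLinear T ∧ ∀ x : T, (Set.Iio x).IsWF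

open Ordinal Cardinal Set

noncomputable section
namespace WST

def Om : Ordinal.{0} := (Cardinal.aleph 1).ord

lemma om_isLimit : Order.IsSuccLimit Om := Cardinal.isSuccLimit_ord (Cardinal.aleph0_le_aleph 1)

lemma succ_lt_om {β : Ordinal.{0}} (h : β < Om) : β + 1 < Om := by
  rw [Ordinal.add_one_eq_succ]
  exact om_isLimit.succ_lt h

lemma zero_lt_om : (0 : Ordinal.{0}) < Om := by simpa using om_isLimit.bot_lt

lemma sup_lt_om {ι : Type} [Countable ι] (f : ι → Ordinal.{0}) (h : ∀ i, f i < Om) :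
    (⨆ i, f i) < Om := by
  have h' : ∀ i, f i < ω_ 1 := by
    rw [← Cardinal.ord_aleph]; exact h
  rw [Om, Cardinal.ord_aleph]
  exact Ordinal.iSup_lt_omega_one h'

lemma bddAbove_of_lt_om {s : Set Ordinal.{0}} (h : ∀ o ∈ s, o < Om) : BddAbove s :=
  ⟨Om, fun o ho => (h o ho).le⟩

lemma sSup_lt_om {s : Set Ordinal.{0}} (hc : s.Countable) (h : ∀ o ∈ s, o < Om) :
    sSup s < Om := by
  rcases s.eq_empty_or_nonempty with rfl | hne
  · simpa using zero_lt_om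
  · obtain ⟨g, rfl⟩ := hc.exists_eq_range hne
    have : sSup (Set.range g) = ⨆ i, g i := rfl
    rw [this]
    exact sup_lt_om g (fun i => h _ ⟨i, rfl⟩)

lemma countable_Iio {o : Ordinal.{0}} (ho : o < Om) : (Set.Iio o).Countable := by
  rw [Cardinal.countable_iff_lt_aleph_one, Ordinal.mk_Iio_ordinal]
  exact Cardinal.lift_lt_aleph_one.2 (Cardinal.lt_ord.1 ho)

lemma Iio_om_not_countable : ¬ (Set.Iio Om).Countable := by
  rw [Cardinal.countable_iff_lt_aleph_one, Ordinal.mk_Iio_ordinal, Om, Cardinal.card_ord]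
  exact fun h => absurd (Cardinal.lift_lt_aleph_one.1 h) (lt_irrefl _)



/-! ### Clubs and stationary sets in ω₁ -/

def Unbdd (C : Set Ordinal.{0}) : Prop := ∀ β < Om, ∃ γ ∈ C, β < γ ∧ γ < Om

def ClosedIn (C : Set Ordinal.{0}) : Prop :=
  ∀ δ, δ < Om → (∃ γ ∈ C, γ < δ) → (∀ β < δ, ∃ γ ∈ C, β < γ ∧ γ < δ) → δ ∈ C

def IsClub (C : Set Ordinal.{0}) : Prop := C ⊆ Set.Iio Om ∧ ClosedIn C ∧ Unbdd C

def Stat (A : Set Ordinal.{0}) : Prop := ∀ C, IsClub C → (A ∩ C).Nonempty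

lemma Stat.mono {A B : Set Ordinal.{0}} (h : Stat A) (hAB : A ⊆ B) : Stat B := by
  intro C hC
  obtain ⟨x, hx1, hx2⟩ := h C hC
  exact ⟨x, hAB hx1, hx2⟩

lemma isClub_Ioo {β : Ordinal.{0}} (hβ : β < Om) : IsClub (Set.Ioo β Om) := by
  refine ⟨fun x hx => hx.2, ?_, ?_⟩
  · rintro δ hδ ⟨γ, hγ, hγδ⟩ _
    exact ⟨hγ.1.trans hγδ, hδ⟩
  · intro b hb
    refine ⟨(max β b) + 1, ⟨?_, ?_⟩, ?_, ?_⟩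
    · exact (le_max_left β b).trans_lt (lt_add_one _)
    · exact succ_lt_om (max_lt hβ hb)
    · exact (le_max_right β b).trans_lt (lt_add_one _)
    · exact succ_lt_om (max_lt hβ hb)

/-- Intersection of countably many clubs is a club. -/
lemma isClub_iInter {D : ℕ → Set Ordinal.{0}} (hD : ∀ n, IsClub (D n)) :
    IsClub (⋂ n, D n) := by
  classical
  refine ⟨fun x hx => (hD 0).1 (Set.mem_iInter.1 hx 0), ?_, ?_⟩
  · intro δ hδ hne hcof
    refine Set.mem_iInter.2 fun n => (hD n).2.1 δ hδ ?_ ?_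
    · obtain ⟨γ, hγ, h2⟩ := hne
      exact ⟨γ, Set.mem_iInter.1 hγ n, h2⟩
    · intro b hb
      obtain ⟨γ, hγ, h2⟩ := hcof b hb
      exact ⟨γ, Set.mem_iInter.1 hγ n, h2⟩
  · intro β hβ
    -- diagonal sequence
    have pick : ∀ n : ℕ, ∀ γ : {o : Ordinal.{0} // o < Om},
        {x : Ordinal.{0} // x ∈ D n ∧ γ.1 < x ∧ x < Om} := by
      intro n γ
      exact Classical.indefiniteDescription _ ((hD n).2.2 γ.1 γ.2)
    let a : ℕ → {o : Ordinal.{0} // o < Om} := fun n => Nat.rec ⟨β, hβ⟩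
      (fun k prev => ⟨(pick k.unpair.1 prev).1, (pick k.unpair.1 prev).2.2.2⟩) n
    have ha_succ : ∀ k, (a k).1 < (a (k+1)).1 := fun k => (pick k.unpair.1 (a k)).2.2.1
    have ha_mem : ∀ k, (a (k+1)).1 ∈ D k.unpair.1 := fun k => (pick k.unpair.1 (a k)).2.1
    have ha_mono : ∀ {j k}, j ≤ k → (a j).1 ≤ (a k).1 := by
      intro j k hjk
      induction k with
      | zero => simp_all
      | succ k ih =>
        rcases Nat.lt_or_ge j (k+1) with h | h
        · exact (ih (Nat.lt_succ_iff.1 h)).trans (ha_succ k).le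
        · have : j = k + 1 := le_antisymm hjk h
          subst this; rfl
    set δ : Ordinal.{0} := ⨆ n, (a n).1 with hδdef
    have hbdd : BddAbove (Set.range fun n => (a n).1) :=
      bddAbove_of_lt_om (by rintro o ⟨n, rfl⟩; exact (a n).2)
    have hδom : δ < Om := sup_lt_om _ (fun n => (a n).2)
    have hle : ∀ n, (a n).1 ≤ δ := fun n => le_ciSup hbdd n
    have hlt : ∀ n, (a n).1 < δ := fun n => lt_of_lt_of_le (ha_succ n) (hle (n+1))
    have hβδ : β < δ := lt_of_lt_of_le (ha_succ 0) (hle 1)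
    have hmemδ : ∀ n, δ ∈ D n := by
      intro n
      refine (hD n).2.1 δ hδom ⟨(a (Nat.pair n 0 + 1)).1, ?_, hlt (Nat.pair n 0 + 1)⟩ ?_
      · have := ha_mem (Nat.pair n 0)
        rwa [Nat.unpair_pair] at this
      · intro b hb
        obtain ⟨j, hj⟩ := (lt_ciSup_iff hbdd).1 hb
        refine ⟨(a (Nat.pair n j + 1)).1, ?_, ?_, hlt (Nat.pair n j + 1)⟩
        · have := ha_mem (Nat.pair n j)
          rwa [Nat.unpair_pair] at this
        · exact hj.trans_le (ha_mono ((Nat.right_le_pair n j).trans (Nat.le_succ _)))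
    exact ⟨δ, Set.mem_iInter.2 hmemδ, hβδ, hδom⟩

lemma isClub_inter {C₁ C₂ : Set Ordinal.{0}} (h₁ : IsClub C₁) (h₂ : IsClub C₂) :
    IsClub (C₁ ∩ C₂) := by
  have : C₁ ∩ C₂ = ⋂ n : ℕ, (fun n => Nat.casesOn n C₁ (fun _ => C₂)) n := by
    ext x
    simp only [Set.mem_inter_iff, Set.mem_iInter]
    constructor
    · rintro ⟨hx1, hx2⟩ n
      cases n with
      | zero => exact hx1
      | succ k => exact hx2
    · intro h
      exact ⟨h 0, h 1⟩
  rw [this]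
  apply isClub_iInter
  intro n
  cases n with
  | zero => exact h₁
  | succ k => exact h₂

/-- Ulam-style argument: there is a stationary set with stationary complement. -/
theorem exists_stat_costat : ∃ S : Set Ordinal.{0}, Stat S ∧ Stat Sᶜ := by
  classical
  -- injections of initial segments into ℕ
  have einj : ∀ δ : {o : Ordinal.{0} // o < Om}, ∃ g : (Set.Iio δ.1) → ℕ, Function.Injective g := by
    intro δ
    have : Countable (Set.Iio δ.1) := Set.countable_coe_iff.2 (countable_Iio δ.2)
    exact Countable.exists_injective_nat _
  choose E hE using einj
  set A : ℕ → Ordinal.{0} → Set Ordinal.{0} := fun n β =>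
    {δ | ∃ h1 : δ < Om, ∃ h2 : β < δ, E ⟨δ, h1⟩ ⟨β, h2⟩ = n} with hA
  -- for every β some column is stationary
  have claim1 : ∀ β, β < Om → ∃ n, Stat (A n β) := by
    intro β hβ
    by_contra hcon
    push_neg at hcon
    have hcon' : ∀ n : ℕ, ∃ D, IsClub D ∧ A n β ∩ D = ∅ := by
      intro n
      have := hcon n
      unfold Stat at this
      push_neg at this
      obtain ⟨C, hC, hCe⟩ := this
      exact ⟨C, hC, hCe⟩
    choose D hD hDe using hcon'
    have hclub : IsClub ((⋂ n, D n) ∩ Set.Ioo β Om) :=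
      isClub_inter (isClub_iInter hD) (isClub_Ioo hβ)
    obtain ⟨δ, hδmem, _, hδom⟩ := hclub.2.2 β hβ
    obtain ⟨hδD, hδIoo⟩ := hδmem
    have h2 : β < δ := hδIoo.1
    set n := E ⟨δ, hδIoo.2⟩ ⟨β, h2⟩ with hn
    have : δ ∈ A n β ∩ D n := ⟨⟨hδIoo.2, h2, rfl⟩, Set.mem_iInter.1 hδD n⟩
    rw [hDe n] at this
    exact this
  have hchoice : ∀ β : {o : Ordinal.{0} // o < Om}, ∃ n, Stat (A n β.1) :=
    fun β => claim1 β.1 β.2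
  choose nf hnf using hchoice
  -- pigeonhole: two distinct β with the same n
  have : ¬ Function.Injective nf := by
    intro hinj
    have : Countable {o : Ordinal.{0} // o < Om} := ⟨⟨nf, hinj⟩⟩
    exact Iio_om_not_countable (Set.countable_coe_iff.1 this)
  rw [Function.not_injective_iff] at this
  obtain ⟨β₁, β₂, hnn, hne⟩ := this
  refine ⟨A (nf β₁) β₁.1, hnf β₁, ?_⟩
  refine (hnf β₂).mono ?_
  rw [hnn]
  intro δ hδ hδ'
  simp only [hA, Set.mem_setOf_eq] at hδ hδ'
  obtain ⟨h1, h2, hval⟩ := hδ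
  obtain ⟨h1', h2', hval'⟩ := hδ'
  apply hne
  have := hE ⟨δ, h1'⟩ (a₁ := ⟨β₂.1, h2⟩) (a₂ := ⟨β₁.1, h2'⟩) (by rw [hval, hval'])
  exact Subtype.ext (congrArg Subtype.val this).symm

/-! ### The tree of closed bounded subsets with limit points in S -/

variable (S : Set Ordinal.{0})

/-- A node: a countable set of countable ordinals, closed in the sense that every
ordinal which is a limit of elements of the set from below belongs to the set and to `S`. -/
def Good (x : Set Ordinal.{0}) : Prop :=
  x.Countable ∧ (∀ o ∈ x, o < Om) ∧
  ∀ δ : Ordinal.{0}, ((x ∩ Set.Iio δ).Nonempty ∧ ∀ β < δ, ∃ a ∈ x, β < a ∧ a < δ) →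
    δ ∈ x ∧ δ ∈ S

def T := {x : Set Ordinal.{0} // Good S x}

variable {S}

instance : PartialOrder (T S) where
  le x y := x.1 ⊆ y.1 ∧ ∀ b ∈ y.1, b ∉ x.1 → ∀ a ∈ x.1, a < b
  le_refl x := ⟨subset_rfl, fun b hb hbx _ _ => absurd hb hbx⟩
  le_trans x y z hxy hyz := by
    refine ⟨hxy.1.trans hyz.1, ?_⟩
    intro b hb hbx a ha
    by_cases hby : b ∈ y.1
    · exact hxy.2 b hby hbx a ha
    · exact hyz.2 b hb hby a (hxy.1 ha)
  le_antisymm x y hxy hyx := Subtype.ext (subset_antisymm hxy.1 hyx.1)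

lemma le_def {x y : T S} : x ≤ y ↔ x.1 ⊆ y.1 ∧ ∀ b ∈ y.1, b ∉ x.1 → ∀ a ∈ x.1, a < b :=
  Iff.rfl

lemma lt_exists_new {x y : T S} (h : x < y) : ∃ b ∈ y.1, b ∉ x.1 := by
  have h1 : x.1 ⊆ y.1 := h.le.1
  have h2 : x.1 ≠ y.1 := fun hh => h.ne (Subtype.ext hh)
  rcases Set.exists_of_ssubset (ssubset_of_subset_of_ne h1 h2) with ⟨b, hb, hbx⟩
  exact ⟨b, hb, hbx⟩

/-- strict upper bound of a node -/
def nbnd (x : T S) : Ordinal.{0} := sSup ((· + 1) '' x.1)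

lemma bddAbove_succ_image (x : T S) : BddAbove ((· + 1) '' x.1) :=
  bddAbove_of_lt_om (by
    rintro o ⟨a, ha, rfl⟩
    exact succ_lt_om (x.2.2.1 a ha))

lemma lt_nbnd {x : T S} {a : Ordinal.{0}} (ha : a ∈ x.1) : a < nbnd x :=
  lt_of_lt_of_le (lt_add_one a) (le_csSup (bddAbove_succ_image x) ⟨a, ha, rfl⟩)

lemma nbnd_lt_om (x : T S) : nbnd x < Om :=
  sSup_lt_om ((x.2.1).image _) (by
    rintro o ⟨a, ha, rfl⟩
    exact succ_lt_om (x.2.2.1 a ha))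

lemma nbnd_le {x : T S} {b : Ordinal.{0}} (hb : ∀ a ∈ x.1, a < b) : nbnd x ≤ b := by
  apply csSup_le'
  rintro o ⟨a, ha, rfl⟩
  show a + 1 ≤ b
  rw [Ordinal.add_one_eq_succ, Order.succ_le_iff]
  exact hb a ha

lemma nbnd_strictMono : StrictMono (nbnd : T S → Ordinal.{0}) := by
  intro x y hxy
  obtain ⟨b, hb, hbx⟩ := lt_exists_new hxy
  have h1 : nbnd x ≤ b := nbnd_le (fun a ha => hxy.le.2 b hb hbx a ha)
  exact h1.trans_lt (lt_nbnd hb)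

lemma wf_T : WellFounded ((· < ·) : T S → T S → Prop) := by
  have := InvImage.wf (nbnd : T S → Ordinal.{0}) Ordinal.lt_wf
  exact Subrelation.wf (fun {a b} h => nbnd_strictMono h) this

/-- the empty node -/
def rootT : T S := ⟨∅, Set.countable_empty, by simp, by
  rintro δ ⟨⟨a, ha, -⟩, -⟩
  exact absurd ha (Set.notMem_empty a)⟩

lemma rootT_le (x : T S) : rootT ≤ x :=
  ⟨Set.empty_subset _, fun b _ _ a ha => absurd ha (Set.notMem_empty a)⟩

lemma isWSTree_T : IsWSTree (T S) := by
  refine ⟨⟨rootT, rootT_le⟩, ?_, ?_⟩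
  · -- DownLinear
    intro x y z hyx hzx
    by_cases hsub : y.1 ⊆ z.1
    · refine Or.inl ⟨hsub, ?_⟩
      intro b hb hby a ha
      exact hyx.2 b (hzx.1 hb) hby a ha
    · -- some a ∈ y \ z, show z ≤ y
      rw [Set.not_subset] at hsub
      obtain ⟨a, hay, haz⟩ := hsub
      have hkey : ∀ c ∈ z.1, c < a := fun c hc => hzx.2 a (hyx.1 hay) haz c hc
      refine Or.inr ⟨?_, ?_⟩
      · intro c hc
        by_contra hcy
        have : a < c := hyx.2 c (hzx.1 hc) hcy a hay
        exact absurd (hkey c hc) (asymm this)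
      · intro b hb hbz c hc
        exact hzx.2 b (hyx.1 hb) hbz c hc
  · intro x
    exact (wf_T.wellFoundedOn : (Set.Iio x).WellFoundedOn _)

/-! ### node surgery lemmas -/

lemma good_max_mem {x : T S} (hne : x.1.Nonempty) : sSup x.1 ∈ x.1 := by
  by_contra hsup
  have hbdd : BddAbove x.1 := bddAbove_of_lt_om x.2.2.1
  have hlt : ∀ a ∈ x.1, a < sSup x.1 := by
    intro a ha
    exact lt_of_le_of_ne (le_csSup hbdd ha) (fun h => hsup (h ▸ ha))
  have := (x.2.2.2 (sSup x.1) ⟨⟨hne.choose, hne.choose_spec, hlt _ hne.choose_spec⟩, ?_⟩).1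
  · exact hsup this
  · intro β hβ
    obtain ⟨a, ha, hβa⟩ := exists_lt_of_lt_csSup hne hβ
    exact ⟨a, ha, hβa, hlt a ha⟩

/-- Adding a successor ordinal above all elements of a node yields a node. -/
lemma good_insert {x : T S} {c : Ordinal.{0}} (hc : ∀ a ∈ x.1, a < c) (hcom : c < Om)
    (hsucc : ∃ ξ, c = ξ + 1) : Good S (insert c x.1) := by
  obtain ⟨ξ, rfl⟩ := hsucc
  refine ⟨x.2.1.insert _, ?_, ?_⟩
  · rintro o (rfl | ho)
    · exact hcom
    · exact x.2.2.1 o ho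
  · rintro δ ⟨hne, hcof⟩
    rcases lt_trichotomy δ (ξ + 1) with hlt | rfl | hgt
    · -- δ < c : reduces to x
      have hxint : insert (ξ+1) x.1 ∩ Set.Iio δ = x.1 ∩ Set.Iio δ := by
        ext o
        simp only [Set.mem_inter_iff, Set.mem_insert_iff, Set.mem_Iio]
        constructor
        · rintro ⟨rfl | ho, h2⟩
          · exact absurd (h2.trans hlt) (lt_irrefl _)
          · exact ⟨ho, h2⟩
        · rintro ⟨ho, h2⟩
          exact ⟨Or.inr ho, h2⟩
      rw [hxint] at hne
      have hcof' : ∀ β < δ, ∃ a ∈ x.1, β < a ∧ a < δ := by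
        intro β hβ
        obtain ⟨a, ha, h1, h2⟩ := hcof β hβ
        rcases ha with rfl | ha
        · exact absurd (h2.trans hlt) (lt_irrefl _)
        · exact ⟨a, ha, h1, h2⟩
      obtain ⟨h1, h2⟩ := x.2.2.2 δ ⟨hne, hcof'⟩
      exact ⟨Set.mem_insert_of_mem _ h1, h2⟩
    · -- δ = c = ξ+1 : impossible, nothing strictly between ξ and ξ+1
      obtain ⟨a, ha, h1, h2⟩ := hcof ξ (lt_add_one ξ)
      rw [Ordinal.add_one_eq_succ, Order.lt_succ_iff] at h2
      exact absurd (h1.trans_le h2) (lt_irrefl _)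
    · -- δ > c : no elements in (c, δ)
      obtain ⟨a, ha, h1, h2⟩ := hcof (ξ+1) hgt
      rcases ha with rfl | ha
      · exact absurd h1 (lt_irrefl _)
      · exact absurd (h1.trans (hc a ha)) (lt_irrefl _)

lemma le_insert {x : T S} {c : Ordinal.{0}} (hc : ∀ a ∈ x.1, a < c) (hcom : c < Om)
    (hsucc : ∃ ξ, c = ξ + 1) : x ≤ (⟨insert c x.1, good_insert hc hcom hsucc⟩ : T S) := by
  refine ⟨Set.subset_insert _ _, ?_⟩
  rintro b (rfl | hb) hbx a ha
  · exact hc a ha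
  · exact absurd hb hbx

lemma lt_insert {x : T S} {c : Ordinal.{0}} (hc : ∀ a ∈ x.1, a < c) (hcom : c < Om)
    (hsucc : ∃ ξ, c = ξ + 1) : x < (⟨insert c x.1, good_insert hc hcom hsucc⟩ : T S) := by
  refine lt_of_le_of_ne (le_insert hc hcom hsucc) ?_
  intro h
  have : c ∈ x.1 := by
    rw [h]
    exact Set.mem_insert _ _
  exact absurd (hc c this) (lt_irrefl _)

/-- Union of an increasing ω-chain, closed off with a point of S. -/
lemma good_union {x : ℕ → T S} (hmono : ∀ k, x k ≤ x (k+1)) {d : Ordinal.{0}}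
    (hdS : d ∈ S) (hdom : d < Om)
    (hbound : ∀ k, ∀ a ∈ (x k).1, a < d)
    (hcof : ∀ β < d, ∃ k, ∃ a ∈ (x k).1, β < a) :
    Good S (insert d (⋃ k, (x k).1)) := by
  have hmono' : ∀ {j k}, j ≤ k → x j ≤ x k := by
    intro j k hjk
    induction k with
    | zero => cases Nat.le_zero.1 hjk; exact le_rfl
    | succ k ih =>
      rcases Nat.lt_or_ge j (k+1) with h | h
      · exact (ih (Nat.lt_succ_iff.1 h)).trans (hmono k)
      · have : j = k + 1 := le_antisymm hjk h
        subst this; exact le_rfl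
  -- stabilization of initial segments
  have hstab : ∀ δ < d, ∃ k, (⋃ j, (x j).1) ∩ Set.Iio δ = (x k).1 ∩ Set.Iio δ := by
    intro δ hδ
    obtain ⟨k₀, a, ha, hδa⟩ := hcof δ hδ
    refine ⟨k₀, ?_⟩
    ext o
    simp only [Set.mem_inter_iff, Set.mem_iUnion, Set.mem_Iio]
    constructor
    · rintro ⟨⟨j, hj⟩, h2⟩
      rcases le_or_gt j k₀ with h | h
      · exact ⟨(hmono' h).1 hj, h2⟩
      · by_cases ho : o ∈ (x k₀).1
        · exact ⟨ho, h2⟩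
        · have hao : a < o := (hmono' h.le).2 o hj ho a ha
          exact absurd h2 (asymm (hδa.trans hao))
    · rintro ⟨ho, h2⟩
      exact ⟨⟨k₀, ho⟩, h2⟩
  refine ⟨(Set.countable_iUnion (fun k => (x k).2.1)).insert _, ?_, ?_⟩
  · rintro o (rfl | ho)
    · exact hdom
    · obtain ⟨j, hj⟩ := Set.mem_iUnion.1 ho
      exact (x j).2.2.1 o hj
  · rintro δ ⟨hne, hcof'⟩
    rcases lt_trichotomy δ d with hlt | rfl | hgt
    · -- δ < d : stabilize and use x k
      obtain ⟨k, hk⟩ := hstab δ hlt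
      have hint : insert d (⋃ j, (x j).1) ∩ Set.Iio δ = (x k).1 ∩ Set.Iio δ := by
        rw [← hk]
        ext o
        simp only [Set.mem_inter_iff, Set.mem_insert_iff, Set.mem_Iio]
        constructor
        · rintro ⟨rfl | ho, h2⟩
          · exact absurd (h2.trans hlt) (lt_irrefl _)
          · exact ⟨ho, h2⟩
        · rintro ⟨ho, h2⟩
          exact ⟨Or.inr ho, h2⟩
      rw [hint] at hne
      have hcof'' : ∀ β < δ, ∃ a ∈ (x k).1, β < a ∧ a < δ := by
        intro β hβ
        obtain ⟨a, ha, h1, h2⟩ := hcof' β hβ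
        have : a ∈ (x k).1 ∩ Set.Iio δ := by
          rw [← hint]
          exact ⟨ha, h2⟩
        exact ⟨a, this.1, h1, this.2⟩
      obtain ⟨h1, h2⟩ := (x k).2.2.2 δ ⟨hne, hcof''⟩
      exact ⟨Set.mem_insert_of_mem _ (Set.mem_iUnion.2 ⟨k, h1⟩), h2⟩
    · exact ⟨Set.mem_insert _ _, hdS⟩
    · -- δ > d : nothing in (d, δ)
      obtain ⟨a, ha, h1, h2⟩ := hcof' d hgt
      rcases ha with rfl | ha
      · exact absurd h1 (lt_irrefl _)
      · obtain ⟨j, hj⟩ := Set.mem_iUnion.1 ha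
        exact absurd (h1.trans (hbound j a hj)) (lt_irrefl _)

lemma le_union {x : ℕ → T S} (hmono : ∀ k, x k ≤ x (k+1)) {d : Ordinal.{0}}
    (hdS : d ∈ S) (hdom : d < Om)
    (hbound : ∀ k, ∀ a ∈ (x k).1, a < d)
    (hcof : ∀ β < d, ∃ k, ∃ a ∈ (x k).1, β < a) (k : ℕ) :
    x k ≤ (⟨insert d (⋃ j, (x j).1), good_union hmono hdS hdom hbound hcof⟩ : T S) := by
  have hmono' : ∀ {j k}, j ≤ k → x j ≤ x k := by
    intro j k hjk
    induction k with
    | zero => cases Nat.le_zero.1 hjk; exact le_rfl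
    | succ k ih =>
      rcases Nat.lt_or_ge j (k+1) with h | h
      · exact (ih (Nat.lt_succ_iff.1 h)).trans (hmono k)
      · have : j = k + 1 := le_antisymm hjk h
        subst this; exact le_rfl
  refine ⟨?_, ?_⟩
  · intro a ha
    exact Set.mem_insert_of_mem _ (Set.mem_iUnion.2 ⟨k, ha⟩)
  · rintro b (rfl | hb) hbk a ha
    · exact hbound k a ha
    · obtain ⟨j, hj⟩ := Set.mem_iUnion.1 hb
      rcases le_or_gt j k with h | h
      · exact absurd ((hmono' h).1 hj) hbk
      · exact (hmono' h.le).2 b hj hbk a ha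

/-! ### chains are countable -/

lemma chain_countable (hSc : Stat Sᶜ) {B : Set (T S)} (hch : IsChain (· ≤ ·) B) :
    B.Countable := by
  by_contra hB
  -- step 1: the elements appearing in B are unbounded in Om
  have hunb : ∀ β, β < Om → ∃ x ∈ B, ∃ a ∈ x.1, β < a := by
    by_contra h
    push_neg at h
    obtain ⟨β, hβ, hbd⟩ := h
    apply hB
    apply Set.countable_of_injective_of_countable_image
      (f := fun x : T S => nbnd x)
    · intro x hx y hy hxy
      rcases eq_or_ne x y with rfl | hne
      · rfl
      · rcases hch hx hy hne with h | h
        · rcases lt_or_eq_of_le h with h | h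
          · exact absurd hxy (ne_of_lt (nbnd_strictMono h))
          · exact h
        · rcases lt_or_eq_of_le h with h | h
          · exact absurd hxy.symm (ne_of_lt (nbnd_strictMono h))
          · exact h.symm
    · apply Set.Countable.mono _ (countable_Iio (succ_lt_om (succ_lt_om hβ)))
      rintro o ⟨x, hx, rfl⟩
      have : nbnd x ≤ β + 1 := by
        apply nbnd_le
        intro a ha
        have := hbd x hx a ha
        exact this.trans_lt (lt_add_one β)
      exact this.trans_lt (lt_add_one _)
  -- step 2: the club of limits of elements of X
  set X : Set Ordinal.{0} := ⋃ x ∈ B, x.1 with hX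
  have hXmem : ∀ a ∈ X, a < Om := by
    intro a ha
    simp only [hX, Set.mem_iUnion] at ha
    obtain ⟨x, hx, hax⟩ := ha
    exact x.2.2.1 a hax
  have pickX : ∀ γ : {o : Ordinal.{0} // o < Om}, {a : Ordinal.{0} // a ∈ X ∧ γ.1 < a ∧ a < Om} := by
    intro γ
    apply Classical.indefiniteDescription
    obtain ⟨x, hx, a, ha, hγa⟩ := hunb γ.1 γ.2
    refine ⟨a, ?_, hγa, x.2.2.1 a ha⟩
    simp only [hX, Set.mem_iUnion]
    exact ⟨x, hx, ha⟩
  set C : Set Ordinal.{0} :=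
    {δ | δ < Om ∧ (∃ a ∈ X, a < δ) ∧ ∀ β < δ, ∃ a ∈ X, β < a ∧ a < δ} with hC
  have hclub : IsClub C := by
    refine ⟨fun o ho => ho.1, ?_, ?_⟩
    · rintro δ hδ ⟨γ, hγC, hγδ⟩ hcof
      refine ⟨hδ, ?_, ?_⟩
      · obtain ⟨a, haX, haγ⟩ := hγC.2.1
        exact ⟨a, haX, haγ.trans hγδ⟩
      · intro β hβ
        obtain ⟨γ', hγ'C, hβγ', hγ'δ⟩ := hcof β hβ
        obtain ⟨a, haX, hβa, haγ'⟩ := hγ'C.2.2 β hβγ'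
        exact ⟨a, haX, hβa, haγ'.trans hγ'δ⟩
    · intro β hβ
      let b : ℕ → {o : Ordinal.{0} // o < Om} := fun n => Nat.rec ⟨β, hβ⟩
        (fun _ prev => ⟨(pickX prev).1, (pickX prev).2.2.2⟩) n
      have hb_succ : ∀ k, (b k).1 < (b (k+1)).1 := fun k => (pickX (b k)).2.2.1
      have hb_mem : ∀ k, (b (k+1)).1 ∈ X := fun k => (pickX (b k)).2.1
      have hbdd : BddAbove (Set.range fun n => (b n).1) :=
        bddAbove_of_lt_om (by rintro o ⟨n, rfl⟩; exact (b n).2)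
      set δ : Ordinal.{0} := ⨆ n, (b n).1 with hδdef
      have hδom : δ < Om := sup_lt_om _ (fun n => (b n).2)
      have hle : ∀ n, (b n).1 ≤ δ := fun n => le_ciSup hbdd n
      have hlt : ∀ n, (b n).1 < δ := fun n => lt_of_lt_of_le (hb_succ n) (hle (n+1))
      refine ⟨δ, ⟨hδom, ⟨(b 1).1, hb_mem 0, hlt 1⟩, ?_⟩, lt_of_lt_of_le (hb_succ 0) (hle 1), hδom⟩
      intro β' hβ'
      obtain ⟨j, hj⟩ := (lt_ciSup_iff hbdd).1 hβ'
      exact ⟨(b (j+1)).1, hb_mem j, hj.trans (hb_succ j), hlt (j+1)⟩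
  -- step 3: every element of C is in S
  have hCS : ∀ δ ∈ C, δ ∈ S := by
    rintro δ ⟨hδom, hδne, hδcof⟩
    obtain ⟨x, hx, a, ha, hδa⟩ := hunb δ hδom
    have hseg : ∀ e ∈ X, e < δ → e ∈ x.1 := by
      intro e he heδ
      simp only [hX, Set.mem_iUnion] at he
      obtain ⟨y, hy, hey⟩ := he
      rcases eq_or_ne y x with rfl | hne
      · exact hey
      · rcases hch hy hx hne with h | h
        · exact h.1 hey
        · by_contra hex
          have : a < e := h.2 e hey hex a ha
          exact absurd heδ (asymm (hδa.trans this))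
    have := (x.2.2.2 δ ⟨?_, ?_⟩).2
    · exact this
    · obtain ⟨e, heX, heδ⟩ := hδne
      exact ⟨e, hseg e heX heδ, heδ⟩
    · intro β hβ
      obtain ⟨e, heX, hβe, heδ⟩ := hδcof β hβ
      exact ⟨e, hseg e heX heδ, hβe, heδ⟩
  obtain ⟨δ, hδSc, hδC⟩ := hSc C hclub
  exact hδSc (hCS δ hδC)

/-! ### no strictly monotone real-valued map -/

lemma sup_lt_om' {ι : Type 1} [Countable ι] [Nonempty ι] (f : ι → Ordinal.{0})
    (h : ∀ i, f i < Om) : (⨆ i, f i) < Om := by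
  obtain ⟨s, hs⟩ := exists_surjective_nat ι
  have : (⨆ i, f i) = ⨆ n, f (s n) := by
    rw [iSup, iSup, ← Function.Surjective.range_comp hs f]
    rfl
  rw [this]
  exact sup_lt_om _ (fun n => h _)

lemma isClub_lim : IsClub {δ : Ordinal.{0} | δ < Om ∧ 0 < δ ∧ ∀ β < δ, β + 1 < δ} := by
  refine ⟨fun o ho => ho.1, ?_, ?_⟩
  · rintro δ hδ ⟨γ, hγ, hγδ⟩ hcof
    refine ⟨hδ, lt_of_le_of_lt (zero_le : (0 : Ordinal.{0}) ≤ γ) hγδ, ?_⟩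
    · intro β hβ
      obtain ⟨c, hc, hβc, hcδ⟩ := hcof β hβ
      have : β + 1 ≤ c := by
        rw [Ordinal.add_one_eq_succ, Order.succ_le_iff]; exact hβc
      exact this.trans_lt hcδ
  · intro β hβ
    -- δ := sup (β + n)
    have hlt : ∀ n : ℕ, β + n < Om := by
      intro n
      induction n with
      | zero => simpa using hβ
      | succ k ih =>
        have : β + (k+1 : ℕ) = (β + k) + 1 := by
          push_cast
          rw [add_assoc]
        rw [this]
        exact succ_lt_om ih
    set δ := ⨆ n : ℕ, β + (n : Ordinal.{0}) with hδ
    have hbdd : BddAbove (Set.range fun n : ℕ => β + (n : Ordinal.{0})) :=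
      bddAbove_of_lt_om (by rintro o ⟨n, rfl⟩; exact hlt n)
    have hδom : δ < Om := sup_lt_om _ hlt
    have hle : ∀ n : ℕ, β + (n : Ordinal.{0}) ≤ δ := fun n => le_ciSup hbdd n
    have hsucc : ∀ n : ℕ, β + (n : Ordinal.{0}) < δ := by
      intro n
      have h1 : β + (n : Ordinal.{0}) < β + ((n+1 : ℕ) : Ordinal.{0}) := by
        have : (n : Ordinal.{0}) < ((n+1:ℕ) : Ordinal.{0}) := by
          exact_mod_cast Nat.lt_succ_self n
        exact (add_lt_add_iff_left β).2 this
      exact h1.trans_le (hle (n+1))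
    have hβδ : β < δ := by
      have h00 : β < β + ((1:ℕ) : Ordinal.{0}) := by
        rw [Nat.cast_one]
        exact lt_add_one β
      exact h00.trans_le (hle 1)
    refine ⟨δ, ⟨hδom, ?_, ?_⟩, hβδ, hδom⟩
    · exact lt_of_le_of_lt (zero_le : (0 : Ordinal.{0}) ≤ β) hβδ
    · intro γ hγ
      obtain ⟨n, hn⟩ := (lt_ciSup_iff hbdd).1 hγ
      have : γ + 1 ≤ β + n := by
        rw [Ordinal.add_one_eq_succ, Order.succ_le_iff]; exact hn
      exact this.trans_lt (hsucc n)

theorem no_strictMono (hSt : Stat S) : ¬ ∃ f : T S → ℝ, StrictMono f := by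
  rintro ⟨f₀, hf₀⟩
  classical
  set f : T S → ℝ := fun x => Real.arctan (f₀ x) with hfdef
  have hfm : StrictMono f := fun a b h => Real.arctan_strictMono (hf₀ h)
  have hfb : ∀ x, f x < Real.pi / 2 := fun x => Real.arctan_lt_pi_div_two _
  set V : T S → ℝ := fun x => sSup (f '' {y | x ≤ y}) with hVdef
  have hbddV : ∀ x : T S, BddAbove (f '' {y | x ≤ y}) := by
    intro x
    exact ⟨Real.pi / 2, by rintro r ⟨y, hy, rfl⟩; exact (hfb y).le⟩
  have hneV : ∀ x : T S, (f '' {y | x ≤ y}).Nonempty :=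
    fun x => ⟨f x, ⟨x, (le_rfl : x ≤ x), rfl⟩⟩
  have hfleV : ∀ {x y : T S}, x ≤ y → f y ≤ V x := by
    intro x y hxy
    exact le_csSup (hbddV x) ⟨y, hxy, rfl⟩
  have hVanti : ∀ {x y : T S}, x ≤ y → V y ≤ V x := by
    intro x y hxy
    apply csSup_le (hneV y)
    rintro r ⟨z, hz, rfl⟩
    exact hfleV (hxy.trans hz)
  -- greedy extension operator
  have hgreedy : ∀ (x : T S) (β : {o : Ordinal.{0} // o < Om}) (k : ℕ),
      ∃ y : T S, x ≤ y ∧ (∃ m ∈ y.1, β.1 < m) ∧ V x - 1 / (k + 1) < f y := by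
    intro x β k
    have hpos : (0:ℝ) < 1 / (k+1) := by positivity
    have hlt : V x - 1 / (k+1) < V x := sub_lt_self _ hpos
    obtain ⟨r, ⟨y₀, hy₀, rfl⟩, hr⟩ := exists_lt_of_lt_csSup (hneV x) hlt
    set c : Ordinal.{0} := max (nbnd y₀) β.1 + 1 with hc
    have hcbig : ∀ a ∈ y₀.1, a < c :=
      fun a ha => ((lt_nbnd ha).trans_le (le_max_left _ _)).trans (lt_add_one _)
    have hcom : c < Om := succ_lt_om (max_lt (nbnd_lt_om y₀) β.2)
    refine ⟨⟨insert c y₀.1, good_insert hcbig hcom ⟨_, rfl⟩⟩,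
      hy₀.trans (le_insert hcbig hcom ⟨_, rfl⟩), ?_, ?_⟩
    · exact ⟨c, Set.mem_insert _ _, (le_max_right _ _).trans_lt (lt_add_one _)⟩
    · exact hr.trans (hfm (lt_insert hcbig hcom ⟨_, rfl⟩))
  choose N hN1 hN2 hN3 using hgreedy
  -- generated system indexed by lists
  obtain ⟨G, hG0, hGs⟩ : ∃ G : List {o : Ordinal.{0} // o < Om} → T S,
      G [] = rootT ∧ ∀ β l, G (β :: l) = N (G l) β l.length :=
    ⟨fun l => List.rec rootT (fun β l' ih => N ih β l'.length) l, rfl, fun β l => rfl⟩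
  -- the bound function
  set g : Ordinal.{0} → Ordinal.{0} := fun γ =>
    if h : γ < Om then
      ⨆ l : List (Set.Iio γ),
        nbnd (G (l.map (fun t => (⟨t.1, lt_trans t.2 h⟩ : {o : Ordinal.{0} // o < Om}))))
    else 0 with hgdef
  have hgeq : ∀ γ (hγ : γ < Om), g γ =
      ⨆ l : List (Set.Iio γ),
        nbnd (G (l.map (fun t => (⟨t.1, lt_trans t.2 hγ⟩ : {o : Ordinal.{0} // o < Om})))) := by
    intro γ hγ
    rw [hgdef]
    simp only [dif_pos hγ]
  have hgom : ∀ γ, γ < Om → g γ < Om := by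
    intro γ hγ
    haveI : Countable (Set.Iio γ) := Set.countable_coe_iff.2 (countable_Iio hγ)
    rw [hgeq γ hγ]
    exact sup_lt_om' _ (fun l => nbnd_lt_om _)
  have hgbound : ∀ (γ : Ordinal.{0}) (hγ : γ < Om) (l : List {o : Ordinal.{0} // o < Om}),
      (∀ t ∈ l, t.1 < γ) → nbnd (G l) ≤ g γ := by
    intro γ hγ l hl
    set emb : Set.Iio γ → {o : Ordinal.{0} // o < Om} :=
      fun t => ⟨t.1, lt_trans t.2 hγ⟩ with hemb
    set l' : List (Set.Iio γ) := l.attach.map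
      (fun t => (⟨t.1.1, hl t.1 t.2⟩ : Set.Iio γ)) with hl'
    have hmap : l'.map emb = l := by
      rw [hl', List.map_map]
      have : (emb ∘ (fun t : {x // x ∈ l} => (⟨t.1.1, hl t.1 t.2⟩ : Set.Iio γ)))
          = fun t : {x // x ∈ l} => t.1 := by
        funext t
        apply Subtype.ext
        rfl
      rw [this]
      exact List.attach_map_subtype_val l
    have hbdd : BddAbove (Set.range fun l'' : List (Set.Iio γ) => nbnd (G (l''.map emb))) :=
      bddAbove_of_lt_om (by rintro o ⟨l'', rfl⟩; exact nbnd_lt_om _)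
    have h1 : nbnd (G l) = nbnd (G (l'.map emb)) := by rw [hmap]
    rw [h1, hgeq γ hγ]
    exact le_ciSup hbdd l'
  -- the closure club
  set C : Set Ordinal.{0} := {δ | δ < Om ∧ ∀ γ < δ, g γ < δ} with hCdef
  have hCclub : IsClub C := by
    refine ⟨fun o ho => ho.1, ?_, ?_⟩
    · rintro δ hδ hne hcof
      refine ⟨hδ, ?_⟩
      intro γ hγ
      obtain ⟨c, hcC, hγc, hcδ⟩ := hcof γ hγ
      exact (hcC.2 γ hγc).trans hcδ
    · intro β hβ
      -- iterate the bound of g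
      have step : ∀ γ : {o : Ordinal.{0} // o < Om}, {c : {o : Ordinal.{0} // o < Om} //
          γ.1 < c.1 ∧ ∀ γ' ≤ γ.1, g γ' ≤ c.1} := by
        intro γ
        have hcnt : (g '' (Set.Iio (γ.1+1))).Countable := (countable_Iio (succ_lt_om γ.2)).image _
        have hsup : sSup (g '' (Set.Iio (γ.1+1))) < Om := by
          apply sSup_lt_om hcnt
          rintro o ⟨γ', hγ', rfl⟩
          exact hgom γ' (lt_trans hγ' (succ_lt_om γ.2))
        refine ⟨⟨max (γ.1+1) (sSup (g '' (Set.Iio (γ.1+1)))), max_lt (succ_lt_om γ.2) hsup⟩,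
          lt_of_lt_of_le (lt_add_one _) (le_max_left _ _), ?_⟩
        intro γ' hγ'
        have hbb : BddAbove (g '' (Set.Iio (γ.1+1))) := by
          apply bddAbove_of_lt_om
          rintro o ⟨γ'', hγ'', rfl⟩
          exact hgom γ'' (lt_trans hγ'' (succ_lt_om γ.2))
        have hmm : g γ' ∈ g '' (Set.Iio (γ.1+1)) := ⟨γ', hγ'.trans_lt (lt_add_one _), rfl⟩
        exact (le_csSup hbb hmm).trans (le_max_right _ _)
      let b : ℕ → {o : Ordinal.{0} // o < Om} := fun n => Nat.rec ⟨β, hβ⟩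
        (fun _ prev => (step prev).1) n
      have hb_succ : ∀ k, (b k).1 < (b (k+1)).1 := fun k => (step (b k)).2.1
      have hb_g : ∀ k, ∀ γ' ≤ (b k).1, g γ' ≤ (b (k+1)).1 := fun k => (step (b k)).2.2
      have hb_mono : ∀ {j k}, j ≤ k → (b j).1 ≤ (b k).1 := by
        intro j k hjk
        induction k with
        | zero => simp_all
        | succ k ih =>
          rcases Nat.lt_or_ge j (k+1) with h | h
          · exact (ih (Nat.lt_succ_iff.1 h)).trans (hb_succ k).le
          · have : j = k + 1 := le_antisymm hjk h
            subst this; rfl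
      have hbdd : BddAbove (Set.range fun n => (b n).1) :=
        bddAbove_of_lt_om (by rintro o ⟨n, rfl⟩; exact (b n).2)
      set δ : Ordinal.{0} := ⨆ n, (b n).1 with hδdef
      have hδom : δ < Om := sup_lt_om _ (fun n => (b n).2)
      have hle : ∀ n, (b n).1 ≤ δ := fun n => le_ciSup hbdd n
      have hlt : ∀ n, (b n).1 < δ := fun n => lt_of_lt_of_le (hb_succ n) (hle (n+1))
      refine ⟨δ, ⟨hδom, ?_⟩, lt_of_lt_of_le (hb_succ 0) (hle 1), hδom⟩
      intro γ hγ
      obtain ⟨j, hj⟩ := (lt_ciSup_iff hbdd).1 hγ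
      exact lt_of_le_of_lt (hb_g j γ hj.le) (hlt (j+1))
  -- pick δ* in S ∩ C ∩ limits
  obtain ⟨δs, hδsS, hδsmem⟩ := hSt _ (isClub_inter hCclub isClub_lim)
  obtain ⟨hδsC, hδsom, hδs0, hδslim⟩ :
      (δs < Om ∧ ∀ γ < δs, g γ < δs) ∧ δs < Om ∧ 0 < δs ∧ ∀ β < δs, β + 1 < δs :=
    ⟨hδsmem.1, hδsmem.2.1, hδsmem.2.2.1, hδsmem.2.2.2⟩
  -- ladder cofinal in δs
  haveI hcnt : Countable (Set.Iio δs) := Set.countable_coe_iff.2 (countable_Iio hδsom)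
  haveI hnem : Nonempty (Set.Iio δs) := ⟨⟨0, hδs0⟩⟩
  obtain ⟨h, hh⟩ := exists_surjective_nat (Set.Iio δs)
  obtain ⟨l, hl1, hl2⟩ : ∃ l : ℕ → {o : Ordinal.{0} // o < δs},
      (∀ k, (l k).1 < (l (k+1)).1) ∧ (∀ j, (h j).1 < (l j).1) := by
    refine ⟨fun n => Nat.rec ⟨(h 0).1 + 1, hδslim _ (h 0).2⟩
      (fun k prev => ⟨max prev.1 (h (k+1)).1 + 1,
        hδslim _ (max_lt prev.2 (h (k+1)).2)⟩) n, ?_, ?_⟩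
    · intro k
      exact lt_of_le_of_lt (le_max_left _ _) (lt_add_one _)
    · intro j
      cases j with
      | zero => exact lt_add_one _
      | succ k => exact lt_of_le_of_lt (le_max_right _ _) (lt_add_one _)
  have hlmono : ∀ {j k}, j < k → (l j).1 < (l k).1 := by
    intro j k hjk
    induction k with
    | zero => exact absurd hjk (Nat.not_lt_zero j)
    | succ k ih =>
      rcases Nat.lt_or_ge j k with hc | hc
      · exact (ih hc).trans (hl1 k)
      · have : j = k := le_antisymm (Nat.lt_succ_iff.1 hjk) hc
        subst this
        exact hl1 j
  have hlcof : ∀ β < δs, ∃ k, β < (l k).1 := by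
    intro β hβ
    obtain ⟨j, hj⟩ := hh ⟨β, hβ⟩
    refine ⟨j, ?_⟩
    have := hl2 j
    rw [hj] at this
    exact this
  -- the run
  obtain ⟨L, hL0, hLs⟩ : ∃ L : ℕ → List {o : Ordinal.{0} // o < Om},
      L 0 = [] ∧ ∀ k, L (k+1) = ⟨(l k).1, (l k).2.trans hδsom⟩ :: L k :=
    ⟨fun k => Nat.rec [] (fun k prev => ⟨(l k).1, (l k).2.trans hδsom⟩ :: prev) k,
      rfl, fun k => rfl⟩
  have hLlen : ∀ k, (L k).length = k := by
    intro k
    induction k with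
    | zero => rw [hL0]; rfl
    | succ k ih => rw [hLs, List.length_cons, ih]
  set x : ℕ → T S := fun k => G (L k) with hxdef
  have hxs : ∀ k, x (k+1) = N (x k) ⟨(l k).1, (l k).2.trans hδsom⟩ k := by
    intro k
    show G (L (k+1)) = _
    rw [hLs, hGs, hLlen]
  have hmono : ∀ k, x k ≤ x (k+1) := by
    intro k
    rw [hxs k]
    exact hN1 _ _ _
  have hentry : ∀ k, ∀ t ∈ L k, t.1 < (l k).1 := by
    intro k
    induction k with
    | zero =>
      rw [hL0]
      intro t ht
      exact absurd ht List.not_mem_nil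
    | succ k ih =>
      intro t ht
      rw [hLs, List.mem_cons] at ht
      rcases ht with rfl | ht
      · exact hl1 k
      · exact (ih t ht).trans (hl1 k)
  have hbound : ∀ k, ∀ a ∈ (x k).1, a < δs := by
    intro k a ha
    have h1 : nbnd (x k) ≤ g (l k).1 :=
      hgbound (l k).1 ((l k).2.trans hδsom) (L k) (hentry k)
    have h2 : g (l k).1 < δs := hδsC.2 (l k).1 (l k).2
    exact ((lt_nbnd ha).trans_le h1).trans h2
  have hcof : ∀ β < δs, ∃ k, ∃ a ∈ (x k).1, β < a := by
    intro β hβ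
    obtain ⟨k, hk⟩ := hlcof β hβ
    obtain ⟨m, hm, hlm⟩ := hN2 (x k) ⟨(l k).1, (l k).2.trans hδsom⟩ k
    rw [← hxs k] at hm
    exact ⟨k+1, m, hm, hk.trans hlm⟩
  -- close the run off with δs and extend once more
  set xstar : T S := ⟨insert δs (⋃ j, (x j).1),
    good_union hmono hδsS hδsom hbound hcof⟩ with hxstar
  have hle_star : ∀ k, x k ≤ xstar := le_union hmono hδsS hδsom hbound hcof
  have hstar_elts : ∀ a ∈ xstar.1, a < δs + 1 := by
    intro a ha
    rw [hxstar] at ha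
    rcases ha with rfl | ha
    · exact lt_add_one _
    · obtain ⟨j, hj⟩ := Set.mem_iUnion.1 ha
      exact (hbound j a hj).trans (lt_add_one _)
  set y : T S := ⟨insert (δs+1) xstar.1,
    good_insert hstar_elts (succ_lt_om hδsom) ⟨_, rfl⟩⟩ with hy
  have h1 : f y ≤ V xstar := hfleV (le_insert hstar_elts (succ_lt_om hδsom) ⟨_, rfl⟩)
  have h2 : V xstar ≤ f xstar := by
    apply le_of_forall_pos_le_add
    intro ε hε
    obtain ⟨k, hk⟩ := exists_nat_one_div_lt hε
    have ha : V xstar ≤ V (x k) := hVanti (hle_star k)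
    have hb : V (x k) - 1 / (k+1) < f (x (k+1)) := by
      have := hN3 (x k) ⟨(l k).1, (l k).2.trans hδsom⟩ k
      rwa [← hxs k] at this
    have hc : f (x (k+1)) ≤ f xstar := hfm.monotone (hle_star (k+1))
    linarith
  have h3 : f xstar < f y := hfm (lt_insert hstar_elts (succ_lt_om hδsom) ⟨_, rfl⟩)
  linarith

theorem main :
    ∃ (T : Type 1) (_ : PartialOrder T),
      IsWSTree T ∧ (∀ B : Set T, IsMaxChain (· ≤ ·) B → B.Countable) ∧
        ¬ ∃ f : T → ℝ, StrictMono f := by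
  obtain ⟨S, hSt, hSc⟩ := exists_stat_costat
  refine ⟨T S, inferInstance, isWSTree_T, ?_, no_strictMono hSt⟩
  intro B hB
  exact chain_countable hSc hB.1

end WST

/-- There is a well-stratified tree with no uncountable branches admitting no
strictly monotonic map into ℝ. -/
theorem exists_wstree_no_uncountable_branches_no_real_grading :
    ∃ (T : Type 1) (_ : PartialOrder T),
      IsWSTree T ∧ (∀ B : Set T, IsMaxChain (· ≤ ·) B → B.Countable) ∧
        ¬ ∃ f : T → ℝ, StrictMono f :=
  WST.main
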